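/- Let T be a tree on the index set I = {i_1,…,i_m} (a set of m−1 edges connecting all of I), and suppose the matrix A satisfies (A_{x,y}−A_{y,y})(A_{x,x}−A_{y,x}) ≠ 0 for every edge {x,y} ∈ T. Fix h ∈ {1,…,m} and α_h ≠ 0, and define α_j = α_h · ∏_{{x,y}∈T_{i_h,i_j}} (A_{x,y}−A_{y,y})/(A_{x,x}−A_{y,x}), where T_{i_h,i_j} is the unique path in T from i_h to i_j. Then all α_j are nonzero, and for every edge {i_u,i_v} ∈ T the relation α_u(A_{i_u,i_v}−A_{i_v,i_v}) = α_v(A_{i_u,i_u}−A_{i_v,i_u}) holds. -/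

import Mathlib

open MvPolynomial

/-- The Lie derivative of a polynomial `P` along the polynomial vector field `f`. -/
noncomputable def lieDeriv {n : ℕ} (f : Fin n → MvPolynomial (Fin n) ℝ)
    (P : MvPolynomial (Fin n) ℝ) : MvPolynomial (Fin n) ℝ :=
  ∑ i, f i * pderiv i P

/-- `P` is a Darboux polynomial for the vector field `f`. -/
def IsDarboux {n : ℕ} (f : Fin n → MvPolynomial (Fin n) ℝ)
    (P : MvPolynomial (Fin n) ℝ) : Prop :=
  ∃ Ccof : MvPolynomial (Fin n) ℝ, lieDeriv f P = Ccof * P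

/-- The Lotka-Volterra vector field `dx_i/dt = x_i (b_i + ∑_j A_{i,j} x_j)`. -/
noncomputable def LV {n : ℕ} (A : Matrix (Fin n) (Fin n) ℝ) (b : Fin n → ℝ) :
    Fin n → MvPolynomial (Fin n) ℝ :=
  fun i => X i * (C (b i) + ∑ j, C (A i j) * X j)

/-- Prop. 2 (general solution): given a tree `T` on the index set
`I = {v 0, …, v (m-1)}` with nondegenerate edges, the coefficients `α_j`
defined as products of ratios along the unique path from `i_h` to `i_j`
are all nonzero and satisfy the edge relations (C3). -/
theorem tree_general_solution {n m : ℕ} (A : Matrix (Fin n) (Fin n) ℝ)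
    (v : Fin m → Fin n) (hv : Function.Injective v)
    (G : SimpleGraph (Fin m)) (hG : G.IsTree)
    (hnd : ∀ u w, G.Adj u w →
      (A (v u) (v w) - A (v w) (v w)) * (A (v u) (v u) - A (v w) (v u)) ≠ 0)
    (h : Fin m) (αh : ℝ) (hαh : αh ≠ 0) (α : Fin m → ℝ)
    (hα : ∀ j, α j = αh *
      ((((SimpleGraph.isTree_iff_existsUnique_path.mp hG).2 h j).choose.darts.map
        (fun d => (A (v d.fst) (v d.snd) - A (v d.snd) (v d.snd)) /
          (A (v d.fst) (v d.fst) - A (v d.snd) (v d.fst))))).prod) :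
    (∀ j, α j ≠ 0) ∧
      ∀ u w, G.Adj u w →
        α u * (A (v u) (v w) - A (v w) (v w)) =
          α w * (A (v u) (v u) - A (v w) (v u)) := by
  classical
  have hT := SimpleGraph.isTree_iff_existsUnique_path.mp hG
  set f : G.Dart → ℝ := fun d =>
    (A (v d.fst) (v d.snd) - A (v d.snd) (v d.snd)) /
      (A (v d.fst) (v d.fst) - A (v d.snd) (v d.fst)) with hf
  -- each factor is nonzero
  have hfne : ∀ d : G.Dart, f d ≠ 0 := by
    intro d
    have hd := d.adj
    have := hnd d.fst d.snd hd
    have h1 : (A (v d.fst) (v d.snd) - A (v d.snd) (v d.snd)) ≠ 0 := left_ne_zero_of_mul this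
    have h2 : (A (v d.fst) (v d.fst) - A (v d.snd) (v d.fst)) ≠ 0 := right_ne_zero_of_mul this
    exact div_ne_zero h1 h2
  have hφne : ∀ {a b : Fin m} (p : G.Walk a b), (p.darts.map f).prod ≠ 0 := by
    intro a b p
    apply List.prod_ne_zero
    intro h0
    rw [List.mem_map] at h0
    obtain ⟨d, -, hd⟩ := h0
    exact hfne d hd
  have hαj : ∀ j, α j = αh * (((hT.2 h j).choose.darts.map f)).prod := hα
  constructor
  · intro j
    rw [hαj j]
    exact mul_ne_zero hαh (hφne _)
  · intro u w huw
    have hne : (A (v u) (v u) - A (v w) (v u)) ≠ 0 := right_ne_zero_of_mul (hnd u w huw)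
    have hne' : (A (v u) (v w) - A (v w) (v w)) ≠ 0 := left_ne_zero_of_mul (hnd u w huw)
    set p : G.Walk h u := (hT.2 h u).choose with hp
    have hpp : p.IsPath := (hT.2 h u).choose_spec.1
    by_cases hws : w ∈ p.support
    · -- path h→u passes through w; takeUntil is the path h→w, rest is single edge w→u
      have hq : (hT.2 h w).choose = p.takeUntil w hws :=
        (hT.2 h w).unique (hT.2 h w).choose_spec.1 (hpp.takeUntil hws)
      have hdrop : p.dropUntil w hws =
          SimpleGraph.Walk.cons huw.symm SimpleGraph.Walk.nil := by
        refine (hT.2 w u).unique (hpp.dropUntil hws) ?_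
        rw [SimpleGraph.Walk.cons_isPath_iff]
        simp [huw.symm.ne]
      have hspec := p.take_spec hws
      have hdarts : p.darts = (p.takeUntil w hws).darts ++ (p.dropUntil w hws).darts := by
        rw [← SimpleGraph.Walk.darts_append, hspec]
      have : α u = α w * f ⟨(w, u), huw.symm⟩ := by
        rw [hαj u, hαj w, hq, hdarts, hdrop]
        simp [mul_assoc]
      have hden : A (v w) (v w) - A (v u) (v w) ≠ 0 := fun hcon => hne' (by linarith)
      rw [this]
      simp only [hf]
      rw [mul_assoc, show (A (v u) (v w) - A (v w) (v w)) =
          -(A (v w) (v w) - A (v u) (v w)) from by ring,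
        mul_neg, div_mul_cancel₀ _ hden]
      ring
    · -- extend path h→u by the edge u→w
      have hcp : (p.concat huw).IsPath := by
        rw [← SimpleGraph.Walk.isPath_reverse_iff, SimpleGraph.Walk.reverse_concat,
          SimpleGraph.Walk.cons_isPath_iff]
        constructor
        · rwa [SimpleGraph.Walk.isPath_reverse_iff]
        · rwa [SimpleGraph.Walk.support_reverse, List.mem_reverse]
      have hq : (hT.2 h w).choose = p.concat huw :=
        (hT.2 h w).unique (hT.2 h w).choose_spec.1 hcp
      have : α w = α u * f ⟨(u, w), huw⟩ := by
        rw [hαj u, hαj w, hq, SimpleGraph.Walk.darts_concat]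
        simp [mul_assoc, hp]
      rw [this]
      simp only [hf]
      rw [mul_assoc, div_mul_cancel₀ _ hne]
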